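/- The physicists' Hermite polynomials satisfy the orthogonality relation ∫_ℝ H_n(x) H_m(x) e^{-x^2} dx = n! · 2^n · √π · δ_{mn}. -/

import Mathlib

open Nat Finset Real MeasureTheory

/-- The physicists' Hermite polynomial, via its explicit formula. -/
noncomputable def hermiteR (n : ℕ) (x : ℝ) : ℝ :=
  (n ! : ℝ) * ∑ m ∈ Finset.range (n / 2 + 1),
    (-1) ^ m * (2 * x) ^ (n - 2 * m) / ((m ! : ℝ) * ((n - 2 * m)! : ℝ))

namespace HermiteOrthAux

open Polynomial

noncomputable def HR : ℕ → Polynomial ℝ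
  | 0 => 1
  | n+1 => C 2 * X * HR n - derivative (HR n)

lemma HR_zero : HR 0 = 1 := rfl
lemma HR_succ (n : ℕ) : HR (n+1) = C 2 * X * HR n - derivative (HR n) := rfl

lemma derivative_HR (n : ℕ) :
    derivative (HR (n+1)) = C (2*(n+1) : ℝ) * HR n := by
  induction n with
  | zero => simp [HR_succ, HR_zero]
  | succ n ih =>
    rw [HR_succ (n+1), derivative_sub, derivative_mul, derivative_mul, derivative_C,
      derivative_X, ih, derivative_mul, derivative_C]
    push_cast
    have h2 : (2*((n:ℝ)+1+1)) = 2*((n:ℝ)+1) + 2 := by ring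
    rw [h2, C_add, HR_succ n]
    ring

lemma iter_deriv_HR_self (n : ℕ) :
    derivative^[n] (HR n) = C ((2:ℝ)^n * n !) := by
  induction n with
  | zero => simp [HR_zero]
  | succ n ih =>
    rw [Function.iterate_succ_apply, derivative_HR, iterate_derivative_C_mul, ih, ← C_mul]
    congr 1
    push_cast [Nat.factorial_succ]
    ring

lemma iter_deriv_HR_lt {m n : ℕ} (h : m < n) : derivative^[n] (HR m) = 0 := by
  induction m generalizing n with
  | zero =>
    obtain ⟨n, rfl⟩ := Nat.exists_eq_add_of_lt h
    simp [HR_zero, Function.iterate_succ_apply, Nat.add_comm]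
  | succ m ih =>
    obtain ⟨n, rfl⟩ : ∃ k, n = k + 1 := ⟨n - 1, by omega⟩
    rw [Function.iterate_succ_apply, derivative_HR, iterate_derivative_C_mul,
      ih (by omega), mul_zero]
noncomputable def gaussF : ℝ → ℝ := fun y => Real.exp (-y ^ 2)

lemma hasDerivAt_gaussF (x : ℝ) : HasDerivAt gaussF (-(2*x) * gaussF x) x := by
  have h : HasDerivAt (fun y : ℝ => -(y^2)) (-(2*x)) x := by
    simpa using (hasDerivAt_pow 2 x).fun_neg
  rw [show gaussF = fun y => Real.exp (-y ^ 2) from rfl]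
  simpa [mul_comm] using h.exp

lemma rodrigues (n : ℕ) (x : ℝ) :
    deriv^[n] gaussF x = (-1)^n * eval x (HR n) * gaussF x := by
  induction n generalizing x with
  | zero => simp [HR_zero]
  | succ n ih =>
    have ih' : deriv^[n] gaussF = fun y => (-1)^n * eval y (HR n) * gaussF y := funext ih
    rw [Function.iterate_succ_apply', ih']
    have h : HasDerivAt (fun y => (-1:ℝ)^n * eval y (HR n) * gaussF y)
        ((-1)^(n+1) * eval x (HR (n+1)) * gaussF x) x := by
      have h1 := (((HR n).hasDerivAt x).const_mul ((-1:ℝ)^n)).fun_mul (hasDerivAt_gaussF x)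
      refine h1.congr_deriv ?_
      rw [HR_succ]
      simp only [eval_sub, eval_mul, eval_C, eval_X, pow_succ]
      ring
    rw [h.deriv]


lemma integrable_pow_gaussF (n : ℕ) :
    Integrable fun x : ℝ => x ^ n * gaussF x := by
  have h := integrable_rpow_mul_exp_neg_mul_sq (b := 1) one_pos
    (s := n) (by exact_mod_cast neg_one_lt_zero.trans_le (Nat.cast_nonneg n))
  simpa [gaussF, Real.rpow_natCast, neg_mul, one_mul] using h

lemma integrable_eval_gaussF (p : Polynomial ℝ) :
    Integrable fun x : ℝ => eval x p * gaussF x := by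
  have : (fun x : ℝ => eval x p * gaussF x)
      = fun x : ℝ => ∑ i ∈ Finset.range (p.natDegree + 1), p.coeff i * (x ^ i * gaussF x) := by
    funext x
    rw [eval_eq_sum_range, Finset.sum_mul]
    simp [mul_assoc]
  rw [this]
  exact integrable_finset_sum _ fun i _ => (integrable_pow_gaussF i).const_mul _

lemma integrable_eval_deriv_gaussF (p : Polynomial ℝ) (n : ℕ) :
    Integrable fun x : ℝ => eval x p * deriv^[n] gaussF x := by
  have : (fun x : ℝ => eval x p * deriv^[n] gaussF x)
      = fun x : ℝ => (-1)^n * (eval x (p * HR n) * gaussF x) := by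
    funext x
    rw [rodrigues]
    simp only [eval_mul]
    ring
  rw [this]
  exact (integrable_eval_gaussF _).const_mul _

lemma ibp (p : Polynomial ℝ) (n : ℕ) :
    ∫ x : ℝ, eval x p * deriv^[n] gaussF x
      = (-1)^n * ∫ x : ℝ, eval x (derivative^[n] p) * gaussF x := by
  induction n generalizing p with
  | zero => simp
  | succ n ih =>
    have hv : ∀ x : ℝ, HasDerivAt (deriv^[n] gaussF) (deriv^[n+1] gaussF x) x := by
      intro x
      have hfun : deriv^[n] gaussF = fun y => (-1:ℝ)^n * eval y (HR n) * gaussF y :=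
        funext (rodrigues n)
      rw [hfun, rodrigues (n+1)]
      have h1 := (((HR n).hasDerivAt x).const_mul ((-1:ℝ)^n)).fun_mul (hasDerivAt_gaussF x)
      refine h1.congr_deriv ?_
      rw [HR_succ]
      simp only [eval_sub, eval_mul, eval_C, eval_X, pow_succ]
      ring
    have hu : ∀ x : ℝ, HasDerivAt (fun y => eval y p) (eval x (derivative p)) x :=
      fun x => p.hasDerivAt x
    have key := MeasureTheory.integral_mul_deriv_eq_deriv_mul_of_integrable (fun x _ => hu x) (fun x _ => hv x)
      (integrable_eval_deriv_gaussF p (n+1))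
      (integrable_eval_deriv_gaussF (derivative p) n)
      (integrable_eval_deriv_gaussF p n)
    rw [key, ih (derivative p), ← Function.iterate_succ_apply]
    ring

lemma HR_orth {m n : ℕ} (hmn : m ≤ n) :
    ∫ x : ℝ, eval x (HR n) * eval x (HR m) * gaussF x
      = if n = m then (n ! : ℝ) * 2 ^ n * Real.sqrt π else 0 := by
  have hpow : ((-1:ℝ))^n * (-1)^n = 1 := by
    rw [← pow_add]
    exact Even.neg_one_pow ⟨n, rfl⟩
  have step1 : (∫ x : ℝ, eval x (HR n) * eval x (HR m) * gaussF x)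
      = (-1)^n * ∫ x : ℝ, eval x (HR m) * deriv^[n] gaussF x := by
    rw [← MeasureTheory.integral_const_mul]
    congr 1
    funext x
    rw [rodrigues]
    linear_combination (-eval x (HR m) * eval x (HR n) * gaussF x) * hpow
  rw [step1, ibp, ← mul_assoc, hpow, one_mul]
  rcases eq_or_lt_of_le hmn with rfl | hlt
  · rw [if_pos rfl, iter_deriv_HR_self]
    simp only [eval_C]
    rw [MeasureTheory.integral_const_mul]
    have : ∫ x : ℝ, gaussF x = Real.sqrt π := by
      have h := integral_gaussian 1
      simpa [gaussF] using h
    rw [this]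
    ring
  · rw [if_neg (by omega), iter_deriv_HR_lt hlt]
    simp
lemma keyid (m d : ℕ) (x : ℝ) :
    ((d+2*m+3)! : ℝ) * ((-1)^(m+1) * (2*x)^(d+1) / (((m+1)! : ℝ) * ((d+1)! : ℝ)))
      = 2*x * (((d+2*m+2)! : ℝ) * ((-1)^(m+1) * (2*x)^d / (((m+1)! : ℝ) * ((d)! : ℝ))))
        - 2*((d:ℝ)+2*m+2) * (((d+2*m+1)! : ℝ) * ((-1)^m * (2*x)^(d+1) / ((m ! : ℝ) * ((d+1)! : ℝ)))) := by
  have e1 : (d+2*m+3)! = (d+2*m+3) * ((d+2*m+2) * (d+2*m+1)!) := by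
    rw [show d+2*m+3 = (d+2*m+2)+1 by omega, Nat.factorial_succ,
      show d+2*m+2 = (d+2*m+1)+1 by omega, Nat.factorial_succ]
  have e2 : (d+2*m+2)! = (d+2*m+2) * (d+2*m+1)! := by
    rw [show d+2*m+2 = (d+2*m+1)+1 by omega, Nat.factorial_succ]
  have e3 : (m+1)! = (m+1) * m ! := Nat.factorial_succ m
  have e4 : (d+1)! = (d+1) * d ! := Nat.factorial_succ d
  rw [e1, e2, e3, e4, pow_succ]
  have h1 : ((m ! : ℝ)) ≠ 0 := Nat.cast_ne_zero.mpr m.factorial_ne_zero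
  have h2 : ((d ! : ℝ)) ≠ 0 := Nat.cast_ne_zero.mpr d.factorial_ne_zero
  have h3 : ((m:ℝ)+1) ≠ 0 := by positivity
  have h4 : ((d:ℝ)+1) ≠ 0 := by positivity
  push_cast
  field_simp
  ring

lemma hermiteR_expand (N : ℕ) (x : ℝ) :
    hermiteR N x = ∑ m ∈ Finset.range (N / 2 + 1),
      (N ! : ℝ) * ((-1) ^ m * (2 * x) ^ (N - 2 * m) / ((m ! : ℝ) * ((N - 2 * m)! : ℝ))) := by
  rw [hermiteR, Finset.mul_sum]

lemma hermiteR_rec (n : ℕ) (x : ℝ) :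
    hermiteR (n+2) x = 2*x*hermiteR (n+1) x - 2*((n:ℝ)+1)*hermiteR n x := by
  rcases Nat.even_or_odd n with he | ho
  · obtain ⟨k, rfl⟩ : ∃ k, n = 2*k := by rcases he with ⟨r, hr⟩; exact ⟨r, by omega⟩
    rw [hermiteR_expand, hermiteR_expand, hermiteR_expand, Finset.mul_sum, Finset.mul_sum]
    rw [show (2*k+2)/2 + 1 = k + 2 by omega, show (2*k+1)/2 + 1 = k + 1 by omega,
      show (2*k)/2 + 1 = k + 1 by omega]
    rw [Finset.sum_range_succ _ (k+1), Finset.sum_range_succ' _ k, Finset.sum_range_succ' _ k,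
      Finset.sum_range_succ _ k]
    have h0 : ((2*k+2)! : ℝ) * ((-1)^(0:ℕ) * (2*x)^(2*k+2-2*0) / (((0:ℕ)! : ℝ) * ((2*k+2-2*0)! : ℝ)))
        = 2*x*(((2*k+1)! : ℝ) * ((-1)^(0:ℕ) * (2*x)^(2*k+1-2*0) / (((0:ℕ)! : ℝ) * ((2*k+1-2*0)! : ℝ)))) := by
      rw [show 2*k+2-2*0 = (2*k+1)+1 by omega, show 2*k+1-2*0 = 2*k+1 by omega,
        show 2*k+2 = (2*k+1)+1 by omega, pow_succ, Nat.factorial_succ]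
      have h1 : (((2*k+1)! : ℕ) : ℝ) ≠ 0 := Nat.cast_ne_zero.mpr (2*k+1).factorial_ne_zero
      push_cast
      field_simp
    have hlast : ((2*k+2)! : ℝ) * ((-1)^(k+1) * (2*x)^(2*k+2-2*(k+1)) / (((k+1)! : ℝ) * ((2*k+2-2*(k+1))! : ℝ)))
        = -(2*((2*k:ℕ)+1:ℝ) * (((2*k)! : ℝ) * ((-1)^k * (2*x)^(2*k-2*k) / ((k ! : ℝ) * ((2*k-2*k)! : ℝ))))) := by
      rw [show 2*k+2-2*(k+1) = 0 by omega, show 2*k-2*k = 0 by omega,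
        show 2*k+2 = (2*k+1)+1 by omega, Nat.factorial_succ (2*k+1),
        show 2*k+1 = (2*k)+1 by omega, Nat.factorial_succ (2*k), Nat.factorial_succ k]
      have h1 : ((k ! : ℕ) : ℝ) ≠ 0 := Nat.cast_ne_zero.mpr k.factorial_ne_zero
      have h2 : ((k:ℝ)+1) ≠ 0 := by positivity
      push_cast [pow_succ]
      field_simp
      ring
    have hmid : (∑ i ∈ Finset.range k, ((2*k+2)! : ℝ) *
          ((-1)^(i+1) * (2*x)^(2*k+2-2*(i+1)) / (((i+1)! : ℝ) * ((2*k+2-2*(i+1))! : ℝ))))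
        = ∑ i ∈ Finset.range k,
          (2*x*(((2*k+1)! : ℝ) * ((-1)^(i+1) * (2*x)^(2*k+1-2*(i+1)) / (((i+1)! : ℝ) * ((2*k+1-2*(i+1))! : ℝ))))
            - 2*((2*k:ℕ)+1:ℝ) * (((2*k)! : ℝ) * ((-1)^i * (2*x)^(2*k-2*i) / ((i ! : ℝ) * ((2*k-2*i)! : ℝ))))) := by
      refine Finset.sum_congr rfl fun i hi => ?_
      rw [Finset.mem_range] at hi
      obtain ⟨j, rfl⟩ : ∃ j, k = i+j+1 := ⟨k-i-1, by omega⟩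
      rw [show 2*(i+j+1)+2-2*(i+1) = 2*j+1+1 by omega,
        show 2*(i+j+1)+1-2*(i+1) = 2*j+1 by omega,
        show 2*(i+j+1)-2*i = 2*j+1+1 by omega,
        show 2*(i+j+1)+2 = 2*j+1+2*i+3 by omega,
        show 2*(i+j+1)+1 = 2*j+1+2*i+2 by omega,
        show 2*(i+j+1) = 2*j+1+2*i+1 by omega]
      have K := keyid i (2*j+1) x
      push_cast at K ⊢
      linear_combination K
    rw [hmid, Finset.sum_sub_distrib]
    push_cast at h0 hlast ⊢
    linarith [h0, hlast]
  · obtain ⟨k, rfl⟩ : ∃ k, n = 2*k+1 := by rcases ho with ⟨r, hr⟩; exact ⟨r, by omega⟩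
    rw [hermiteR_expand, hermiteR_expand, hermiteR_expand, Finset.mul_sum, Finset.mul_sum]
    rw [show (2*k+1+2)/2 + 1 = k + 2 by omega, show (2*k+1+1)/2 + 1 = k + 2 by omega,
      show (2*k+1)/2 + 1 = k + 1 by omega]
    rw [Finset.sum_range_succ' _ (k+1), Finset.sum_range_succ' _ (k+1)]
    have h0 : ((2*k+1+2)! : ℝ) * ((-1)^(0:ℕ) * (2*x)^(2*k+1+2-2*0) / (((0:ℕ)! : ℝ) * ((2*k+1+2-2*0)! : ℝ)))
        = 2*x*(((2*k+1+1)! : ℝ) * ((-1)^(0:ℕ) * (2*x)^(2*k+1+1-2*0) / (((0:ℕ)! : ℝ) * ((2*k+1+1-2*0)! : ℝ)))) := by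
      rw [show 2*k+1+2-2*0 = (2*k+2)+1 by omega, show 2*k+1+1-2*0 = 2*k+2 by omega,
        show 2*k+1+2 = (2*k+2)+1 by omega, show 2*k+1+1 = 2*k+2 by omega, pow_succ,
        Nat.factorial_succ (2*k+2)]
      have h1 : (((2*k+2)! : ℕ) : ℝ) ≠ 0 := Nat.cast_ne_zero.mpr (2*k+2).factorial_ne_zero
      push_cast
      field_simp
    have hmid : (∑ i ∈ Finset.range (k+1), ((2*k+1+2)! : ℝ) *
          ((-1)^(i+1) * (2*x)^(2*k+1+2-2*(i+1)) / (((i+1)! : ℝ) * ((2*k+1+2-2*(i+1))! : ℝ))))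
        = ∑ i ∈ Finset.range (k+1),
          (2*x*(((2*k+1+1)! : ℝ) * ((-1)^(i+1) * (2*x)^(2*k+1+1-2*(i+1)) / (((i+1)! : ℝ) * ((2*k+1+1-2*(i+1))! : ℝ))))
            - 2*((2*k+1:ℕ)+1:ℝ) * (((2*k+1)! : ℝ) * ((-1)^i * (2*x)^(2*k+1-2*i) / ((i ! : ℝ) * ((2*k+1-2*i)! : ℝ))))) := by
      refine Finset.sum_congr rfl fun i hi => ?_
      rw [Finset.mem_range] at hi
      obtain ⟨j, rfl⟩ : ∃ j, k = i+j := ⟨k-i, by omega⟩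
      rw [show 2*(i+j)+1+2-2*(i+1) = 2*j+1 by omega,
        show 2*(i+j)+1+1-2*(i+1) = 2*j by omega,
        show 2*(i+j)+1-2*i = 2*j+1 by omega,
        show 2*(i+j)+1+2 = 2*j+2*i+3 by omega,
        show 2*(i+j)+1+1 = 2*j+2*i+2 by omega,
        show 2*(i+j)+1 = 2*j+2*i+1 by omega]
      have K := keyid i (2*j) x
      push_cast at K ⊢
      linear_combination K
    rw [hmid, Finset.sum_sub_distrib]
    push_cast at h0 ⊢
    linarith [h0]
lemma hermiteR_eq (n : ℕ) (x : ℝ) : hermiteR n x = eval x (HR n) := by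
  induction n using Nat.twoStepInduction generalizing x with
  | zero => simp [hermiteR, HR_zero]
  | one => simp [hermiteR, HR_succ, HR_zero]
  | more n ih1 ih2 =>
    rw [hermiteR_rec, show n+1+1 = (n+1)+1 from rfl, HR_succ (n+1), derivative_HR,
      eval_sub, eval_mul, eval_mul, eval_C, eval_X, eval_mul, eval_C, ih1, ih2]

end HermiteOrthAux

open HermiteOrthAux Polynomial in
theorem stmt_6 (n m : ℕ) :
    ∫ x : ℝ, hermiteR n x * hermiteR m x * Real.exp (-x ^ 2) =
      if n = m then (n ! : ℝ) * 2 ^ n * Real.sqrt π else 0 := by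
  have main : ∀ a b : ℕ, b ≤ a →
      ∫ x : ℝ, hermiteR a x * hermiteR b x * Real.exp (-x ^ 2)
        = if a = b then (a ! : ℝ) * 2 ^ a * Real.sqrt π else 0 := by
    intro a b hba
    have hfun : (fun x : ℝ => hermiteR a x * hermiteR b x * Real.exp (-x ^ 2))
        = fun x : ℝ => eval x (HR a) * eval x (HR b) * gaussF x := by
      funext x
      rw [hermiteR_eq, hermiteR_eq]
      rfl
    rw [hfun]
    exact HR_orth hba
  rcases le_total m n with h | h
  · exact main n m h
  · have hcomm : (fun x : ℝ => hermiteR n x * hermiteR m x * Real.exp (-x ^ 2))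
        = fun x : ℝ => hermiteR m x * hermiteR n x * Real.exp (-x ^ 2) :=
      funext fun x => by ring
    rw [hcomm, main m n h]
    by_cases hnm : n = m
    · subst hnm; simp
    · rw [if_neg (fun h' => hnm h'.symm), if_neg hnm]
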